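/- Water-filling does not increase total cost: under the staircase nondecreasing cost assumption, the water-filled matrix P' of a stochastic matrix P satisfies Σ_{x,y} p(x)c(x,y)p'_{xy} ≤ Σ_{x,y} p(x)c(x,y)p_{xy}. -/

import Mathlib

open Finset
open scoped ENNReal

/-- Partial row sums of the water-filled matrix: `wfSum P c x n` is the total mass
placed in the first `n` columns of row `x` by the water-filling procedure, which fills
each row left to right up to the column maxima of `P`, skipping infinite-cost entries. -/
noncomputable def wfSum {M N : ℕ} (P : Fin (M + 1) → Fin (N + 1) → ℝ)
    (c : Fin (M + 1) → Fin (N + 1) → ℝ≥0∞) (x : Fin (M + 1)) : ℕ → ℝ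
  | 0 => 0
  | n + 1 =>
    if h : n < N + 1 then
      if c x ⟨n, h⟩ = ⊤ then wfSum P c x n
      else wfSum P c x n +
        min (univ.sup' univ_nonempty fun x' => P x' ⟨n, h⟩) (1 - wfSum P c x n)
    else wfSum P c x n

/-- The water-filled matrix `P'` associated to `P` and the cost function `c`. -/
noncomputable def waterfill {M N : ℕ} (P : Fin (M + 1) → Fin (N + 1) → ℝ)
    (c : Fin (M + 1) → Fin (N + 1) → ℝ≥0∞) (x : Fin (M + 1)) (i : Fin (N + 1)) : ℝ :=
  wfSum P c x (i.val + 1) - wfSum P c x i.val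

/-- Telescoping prefix sums over `Fin (N+1)`. -/
lemma prefix_sum_telescope {N : ℕ} (f : ℕ → ℝ) :
    ∀ n, n ≤ N + 1 →
      ∑ y ∈ univ.filter (fun y : Fin (N + 1) => y.val < n), (f (y.val + 1) - f y.val)
        = f n - f 0 := by
  intro n
  induction n with
  | zero => intro _; simp
  | succ n ih =>
    intro hn
    have h1 : univ.filter (fun y : Fin (N + 1) => y.val < n + 1)
        = insert (⟨n, by omega⟩ : Fin (N + 1))
            (univ.filter fun y : Fin (N + 1) => y.val < n) := by
      ext y
      simp only [mem_filter, mem_univ, true_and, mem_insert, Fin.ext_iff]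
      omega
    rw [h1, sum_insert (by simp), ih (by omega)]
    ring

lemma abel_le {N : ℕ} (c : Fin (N + 1) → ℝ≥0∞) (q r : Fin (N + 1) → ℝ)
    (hq0 : ∀ y, 0 ≤ q y) (hr0 : ∀ y, 0 ≤ r y)
    (hqt : ∀ y, c y = ⊤ → q y = 0) (hrt : ∀ y, c y = ⊤ → r y = 0)
    (hstair : ∀ i j : Fin (N + 1), i < j → c i ≠ ⊤ → c i ≤ c j ∧ c j ≠ ⊤)
    (htail : ∀ n : ℕ, ∑ y ∈ univ.filter (fun y : Fin (N + 1) => n ≤ y.val), q y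
      ≤ ∑ y ∈ univ.filter (fun y : Fin (N + 1) => n ≤ y.val), r y) :
    ∑ y, ENNReal.ofReal (q y) * c y ≤ ∑ y, ENNReal.ofReal (r y) * c y := by
  by_cases hall : ∀ y, c y = ⊤
  · simp [hqt _ (hall _), hrt _ (hall _)]
  push_neg at hall
  obtain ⟨y₀, hy₀⟩ := hall
  set F := univ.filter (fun y : Fin (N + 1) => c y ≠ ⊤) with hF
  have hFne : F.Nonempty := ⟨y₀, by simp [hF, hy₀]⟩
  set k := F.min' hFne with hkdef
  have hk : c k ≠ ⊤ := (mem_filter.mp (F.min'_mem hFne)).2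
  have hmin : ∀ y : Fin (N + 1), y < k → c y = ⊤ := by
    intro y hy
    by_contra h
    exact absurd (F.min'_le y (by simp [hF, h])) (not_le.mpr hy)
  have hfinge : ∀ y : Fin (N + 1), k ≤ y → c y ≠ ⊤ := by
    intro y hy
    rcases eq_or_lt_of_le hy with h | h
    · rwa [← h]
    · exact (hstair k y h hk).2
  set d : ℕ → ℝ≥0∞ := fun j =>
    if h : j + 1 < N + 1 then c ⟨j + 1, h⟩ - c ⟨j, by omega⟩ else 0 with hd
  have claimA : ∀ n (h : n < N + 1), k.val ≤ n →
      c ⟨n, h⟩ = c k + ∑ j ∈ Finset.Ico k.val n, d j := by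
    intro n
    induction n with
    | zero =>
      intro h hk0
      have : k = ⟨0, h⟩ := Fin.ext (by simp only [Fin.val_mk]; omega)
      simp [← this]
    | succ n ih =>
      intro h hkn
      rcases eq_or_lt_of_le hkn with heq | hlt
      · have hkk : k = ⟨n + 1, h⟩ := Fin.ext (by simpa using heq)
        rw [← hkk, ← heq]
        simp
      · have hkn' : k.val ≤ n := by omega
        have hn : n < N + 1 := by omega
        have hcn : c ⟨n, hn⟩ ≠ ⊤ := hfinge ⟨n, hn⟩ hkn'
        have hle : c ⟨n, hn⟩ ≤ c ⟨n + 1, h⟩ :=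
          (hstair ⟨n, hn⟩ ⟨n + 1, h⟩ (by simp [Fin.lt_def]) hcn).1
        have h' : n < N := by omega
        have hdn : d n = c ⟨n + 1, h⟩ - c ⟨n, hn⟩ := by simp [hd, h']
        rw [Finset.sum_Ico_succ_top hkn', ← add_assoc, ← ih hn hkn', hdn]
        exact (add_tsub_cancel_of_le hle).symm
  -- decomposition
  have decomp : ∀ m : Fin (N + 1) → ℝ, (∀ y, 0 ≤ m y) → (∀ y, c y = ⊤ → m y = 0) →
      ∑ y, ENNReal.ofReal (m y) * c y
        = c k * ENNReal.ofReal (∑ y ∈ univ.filter (fun y : Fin (N + 1) => 0 ≤ y.val), m y)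
          + ∑ j ∈ Finset.range (N + 1),
              (if k.val ≤ j then
                d j * ENNReal.ofReal
                  (∑ y ∈ univ.filter (fun y : Fin (N + 1) => j + 1 ≤ y.val), m y)
              else 0) := by
    intro m hm0 hm
    have step1 : ∑ y, ENNReal.ofReal (m y) * c y
        = ∑ y : Fin (N + 1), ENNReal.ofReal (m y)
            * (c k + ∑ j ∈ Finset.Ico k.val y.val, d j) := by
      refine Finset.sum_congr rfl fun y _ => ?_
      by_cases hy : k ≤ y
      · have := claimA y.val y.isLt hy
        rw [Fin.eta] at this
        rw [this]
      · have : c y = ⊤ := hmin y (lt_of_not_ge hy)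
        simp [hm y this]
    rw [step1]
    have step2 : ∀ y : Fin (N + 1),
        ENNReal.ofReal (m y) * (c k + ∑ j ∈ Finset.Ico k.val y.val, d j)
          = ENNReal.ofReal (m y) * c k
            + ∑ j ∈ Finset.range (N + 1),
                (if j ∈ Finset.Ico k.val y.val then ENNReal.ofReal (m y) * d j else 0) := by
      intro y
      rw [mul_add, Finset.mul_sum, Finset.sum_ite_mem,
        Finset.inter_eq_right.mpr (by
          intro j hj
          simp only [Finset.mem_Ico] at hj
          simp only [Finset.mem_range]
          omega)]
    simp_rw [step2]
    rw [Finset.sum_add_distrib, Finset.sum_comm]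
    congr 1
    · have hfilt : univ.filter (fun y : Fin (N + 1) => 0 ≤ y.val) = univ := by simp
      rw [hfilt, ENNReal.ofReal_sum_of_nonneg (fun i _ => hm0 i), Finset.mul_sum]
      exact Finset.sum_congr rfl fun y _ => mul_comm _ _
    · refine Finset.sum_congr rfl fun j _ => ?_
      by_cases hj : k.val ≤ j
      · simp only [Finset.mem_Ico, hj, true_and, if_pos hj]
        rw [← Finset.sum_filter]
        have hfilt : univ.filter (fun y : Fin (N + 1) => j < y.val)
            = univ.filter (fun y : Fin (N + 1) => j + 1 ≤ y.val) := by
          apply Finset.filter_congr; intro y _; exact Nat.lt_iff_add_one_le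
        rw [hfilt, ← Finset.sum_mul,
          ENNReal.ofReal_sum_of_nonneg (fun i _ => hm0 i), mul_comm]
        rfl
      · simp only [Finset.mem_Ico, hj, false_and, if_neg hj]
        simp
  rw [decomp q hq0 hqt, decomp r hr0 hrt]
  refine add_le_add (mul_le_mul_right (ENNReal.ofReal_le_ofReal (htail 0)) _) ?_
  refine Finset.sum_le_sum fun j _ => ?_
  by_cases hj : k.val ≤ j
  · simp only [if_pos hj]
    exact mul_le_mul_right (ENNReal.ofReal_le_ofReal (htail (j + 1))) _
  · simp [if_neg hj]

section WF
variable {M N : ℕ} (P : Fin (M + 1) → Fin (N + 1) → ℝ)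
    (c : Fin (M + 1) → Fin (N + 1) → ℝ≥0∞) (x : Fin (M + 1))

lemma wfSum_bounds (hPnn : ∀ x y, 0 ≤ P x y) :
    ∀ n, 0 ≤ wfSum P c x n ∧ wfSum P c x n ≤ 1 := by
  intro n
  induction n with
  | zero => simp [wfSum]
  | succ n ih =>
    rw [wfSum]
    split_ifs with h1 h2
    · exact ih
    · have hs : (0:ℝ) ≤ univ.sup' univ_nonempty fun x' => P x' ⟨n, h1⟩ :=
        le_trans (hPnn x ⟨n, h1⟩) (Finset.le_sup' (fun x' => P x' _) (mem_univ x))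
      constructor
      · have : (0:ℝ) ≤ min (univ.sup' univ_nonempty fun x' => P x' ⟨n, h1⟩)
            (1 - wfSum P c x n) := le_min hs (by linarith [ih.2])
        linarith [ih.1]
      · have := min_le_right (univ.sup' univ_nonempty fun x' => P x' ⟨n, h1⟩)
          (1 - wfSum P c x n)
        linarith
    · exact ih

lemma wfSum_mono (hPnn : ∀ x y, 0 ≤ P x y) (n : ℕ) :
    wfSum P c x n ≤ wfSum P c x (n + 1) := by
  rw [show wfSum P c x (n+1) = _ from rfl, wfSum]
  split_ifs with h1 h2
  · exact le_refl _
  · have hs : (0:ℝ) ≤ univ.sup' univ_nonempty fun x' => P x' ⟨n, h1⟩ :=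
      le_trans (hPnn x ⟨n, h1⟩) (Finset.le_sup' (fun x' => P x' _) (mem_univ x))
    have h01 := wfSum_bounds P c x hPnn n
    have : (0:ℝ) ≤ min (univ.sup' univ_nonempty fun x' => P x' ⟨n, h1⟩)
        (1 - wfSum P c x n) := le_min hs (by linarith [h01.2])
    linarith
  · exact le_refl _

lemma wfSum_dominates (hPnn : ∀ x y, 0 ≤ P x y) (hProw : ∑ y, P x y = 1)
    (hfin : ∀ y, c x y = ⊤ → P x y = 0) :
    ∀ n, ∑ y ∈ univ.filter (fun y : Fin (N + 1) => y.val < n), P x y ≤ wfSum P c x n := by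
  have hR1 : ∀ n, ∑ y ∈ univ.filter (fun y : Fin (N + 1) => y.val < n), P x y ≤ 1 := by
    intro n
    rw [← hProw]
    exact Finset.sum_le_sum_of_subset_of_nonneg (Finset.filter_subset _ _)
      (fun y _ _ => hPnn x y)
  intro n
  induction n with
  | zero => simp [wfSum]
  | succ n ih =>
    by_cases hn : n < N + 1
    · have h1 : univ.filter (fun y : Fin (N + 1) => y.val < n + 1)
          = insert (⟨n, hn⟩ : Fin (N + 1))
              (univ.filter fun y : Fin (N + 1) => y.val < n) := by
        ext y
        simp only [mem_filter, mem_univ, true_and, mem_insert, Fin.ext_iff]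
        omega
      rw [h1, sum_insert (by simp)]
      rw [wfSum, dif_pos hn]
      by_cases ht : c x ⟨n, hn⟩ = ⊤
      · rw [if_pos ht, hfin _ ht]
        linarith
      · rw [if_neg ht]
        have hs : P x ⟨n, hn⟩ ≤ univ.sup' univ_nonempty fun x' => P x' ⟨n, hn⟩ :=
          Finset.le_sup' (fun x' => P x' _) (mem_univ x)
        have hle1 : P x ⟨n, hn⟩ + ∑ y ∈ univ.filter
            (fun y : Fin (N + 1) => y.val < n), P x y ≤ 1 := by
          have := hR1 (n + 1)
          rw [h1, sum_insert (by simp)] at this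
          exact this
        rcases le_total (univ.sup' univ_nonempty fun x' => P x' ⟨n, hn⟩)
            (1 - wfSum P c x n) with h | h
        · rw [min_eq_left h]; linarith
        · rw [min_eq_right h]; linarith
    · have h1 : univ.filter (fun y : Fin (N + 1) => y.val < n + 1)
          = univ.filter fun y : Fin (N + 1) => y.val < n := by
        ext y
        simp only [mem_filter, mem_univ, true_and]
        have := y.isLt
        omega
      rw [h1, wfSum, dif_neg hn]
      exact ih

end WF

/-- Water-filling does not increase the total expected cost, provided the cost
function is staircase nondecreasing and `P` is a stochastic matrix of finite cost. -/
theorem waterfill_cost_le {M N : ℕ}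
    (p : Fin (M + 1) → ℝ) (hp : ∀ x, 0 ≤ p x) (hp1 : ∑ x, p x = 1)
    (P : Fin (M + 1) → Fin (N + 1) → ℝ)
    (c : Fin (M + 1) → Fin (N + 1) → ℝ≥0∞)
    (hPnn : ∀ x y, 0 ≤ P x y) (hProw : ∀ x, ∑ y, P x y = 1)
    (hfin : ∀ x y, c x y = ⊤ → P x y = 0)
    (hstair₁ : ∀ i j : Fin (M + 1), i < j → ∀ y, c i y = ⊤ → c j y = ⊤)
    (hstair₂ : ∀ x, ∀ i j : Fin (N + 1), i < j → c x i ≠ ⊤ →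
      c x i ≤ c x j ∧ c x j ≠ ⊤) :
    ∑ x, ∑ y, ENNReal.ofReal (p x * waterfill P c x y) * c x y ≤
      ∑ x, ∑ y, ENNReal.ofReal (p x * P x y) * c x y := by
  refine Finset.sum_le_sum fun x _ => ?_
  have hW0 : wfSum P c x 0 = 0 := rfl
  have hq0 : ∀ y, 0 ≤ waterfill P c x y := fun y =>
    sub_nonneg.mpr (wfSum_mono P c x hPnn y.val)
  have hqt : ∀ y, c x y = ⊤ → waterfill P c x y = 0 := by
    intro y hy
    have : wfSum P c x (y.val + 1) = wfSum P c x y.val := by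
      rw [wfSum, dif_pos y.isLt, if_pos (by rw [Fin.eta]; exact hy)]
    simp [waterfill, this]
  have hpre : ∀ n, n ≤ N + 1 →
      ∑ y ∈ univ.filter (fun y : Fin (N + 1) => y.val < n), waterfill P c x y
        = wfSum P c x n := by
    intro n hn
    have := prefix_sum_telescope (wfSum P c x) n hn
    rw [hW0, sub_zero] at this
    simpa [waterfill] using this
  have hfiltuniv : univ.filter (fun y : Fin (N + 1) => y.val < N + 1) = univ := by
    apply Finset.filter_true_of_mem
    intro y _
    exact y.isLt
  have hW1 : wfSum P c x (N + 1) = 1 := by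
    have h1 := wfSum_dominates P c x hPnn (hProw x) (hfin x) (N + 1)
    rw [hfiltuniv, hProw x] at h1
    have h2 := (wfSum_bounds P c x hPnn (N + 1)).2
    linarith
  have hq1 : ∑ y, waterfill P c x y = 1 := by
    have := hpre (N + 1) le_rfl
    rwa [hfiltuniv, hW1] at this
  have hsplit : ∀ (n : ℕ) (m : Fin (N + 1) → ℝ),
      ∑ y ∈ univ.filter (fun y : Fin (N + 1) => y.val < n), m y
        + ∑ y ∈ univ.filter (fun y : Fin (N + 1) => n ≤ y.val), m y = ∑ y, m y := by
    intro n m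
    rw [← Finset.sum_filter_add_sum_filter_not univ (fun y : Fin (N + 1) => y.val < n) m]
    congr 1
    apply Finset.sum_congr _ fun _ _ => rfl
    apply Finset.filter_congr
    intro y _
    simp [not_lt]
  have htail : ∀ n : ℕ,
      ∑ y ∈ univ.filter (fun y : Fin (N + 1) => n ≤ y.val), waterfill P c x y
        ≤ ∑ y ∈ univ.filter (fun y : Fin (N + 1) => n ≤ y.val), P x y := by
    intro n
    by_cases hn : n ≤ N + 1
    · have h1 := hsplit n (waterfill P c x)
      have h2 := hsplit n (P x)
      rw [hq1, hpre n hn] at h1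
      rw [hProw x] at h2
      have h3 := wfSum_dominates P c x hPnn (hProw x) (hfin x) n
      linarith
    · have hempty : univ.filter (fun y : Fin (N + 1) => n ≤ y.val) = ∅ := by
        apply Finset.eq_empty_of_forall_notMem
        intro y hy
        simp only [mem_filter, mem_univ, true_and] at hy
        have := y.isLt
        omega
      rw [hempty]
      simp
  have hrow : ∑ y, ENNReal.ofReal (waterfill P c x y) * c x y
      ≤ ∑ y, ENNReal.ofReal (P x y) * c x y :=
    abel_le (c x) (waterfill P c x) (P x) hq0 (fun y => hPnn x y) hqt (hfin x)
      (hstair₂ x) htail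
  calc ∑ y, ENNReal.ofReal (p x * waterfill P c x y) * c x y
      = ENNReal.ofReal (p x) * ∑ y, ENNReal.ofReal (waterfill P c x y) * c x y := by
        rw [Finset.mul_sum]
        exact Finset.sum_congr rfl fun y _ => by
          rw [ENNReal.ofReal_mul (hp x), mul_assoc]
    _ ≤ ENNReal.ofReal (p x) * ∑ y, ENNReal.ofReal (P x y) * c x y :=
        mul_le_mul_right hrow _
    _ = ∑ y, ENNReal.ofReal (p x * P x y) * c x y := by
        rw [Finset.mul_sum]
        exact Finset.sum_congr rfl fun y _ => by
          rw [ENNReal.ofReal_mul (hp x), mul_assoc]
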